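/- Let 0 < ε < 1 and d ≥ 2, let M be the noisy projective measurement in dimension d, let ψ = (1/√d)·(1,…,1) ∈ ℂ^d be the unbiased state, and let K be the square-root decomposition of M at ψ, i.e. K x x = √(M x)·|ψ⟩⟨ψ|·√(M x) + (ε/d)·(c_{≠x}·𝟙_{≠x} − 𝟙_{≠x}·|ψ⟩⟨ψ|·𝟙_{≠x}) with 𝟙_{≠x} = 1 − stdBasisMatrix x x 1 and c_{≠x} = (d−1)/d, and K x j = |v_{x,j}⟩⟨v_{x,j}| with v_{x,j} = √(M x)·(ψ_j·e_x − ψ_x·e_j) for x ≠ j. Then with A = d − (d−1)·ε one has ⟪ψ, (K x x)·ψ⟫ = (1/d³)·(√A + (d−1)·√ε)² for every x, and ⟪ψ, (K x j)·ψ⟫ = (1/d³)·(√A − √ε)² for every x ≠ j. -/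

import Mathlib

open Matrix ComplexOrder

noncomputable section

/-- `K` is a valid decomposition of the POVM `M`. -/
def IsDecomp {m d : ℕ} (M : Fin m → Matrix (Fin d) (Fin d) ℂ)
    (K : Fin m → Fin m → Matrix (Fin d) (Fin d) ℂ) : Prop :=
  (∀ x j, (K x j).PosSemidef) ∧
  (∀ j, (d : ℂ) • ∑ x, K x j = (∑ x, (K x j).trace) • (1 : Matrix (Fin d) (Fin d) ℂ)) ∧
  (∀ x, ∑ j, K x j = M x)

/-- Eve's objective for the decomposition `K` and the state `φ`:
`∑_j ⟪φ, (K j j) φ⟫`. -/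
def objective {m d : ℕ} (K : Fin m → Fin m → Matrix (Fin d) (Fin d) ℂ)
    (φ : Fin d → ℂ) : ℝ :=
  ∑ j, (star φ ⬝ᵥ (K j j).mulVec φ).re

/-- The noisy projective measurement in dimension `d` with noise parameter `ε`. -/
def noisyM (d : ℕ) (ε : ℝ) : Fin d → Matrix (Fin d) (Fin d) ℂ :=
  fun x => ((1 - ε : ℝ) : ℂ) • Matrix.single x x 1 + ((ε / d : ℝ) : ℂ) • 1

/-- The positive semidefinite square root of `noisyM d ε x`. -/
def sqrtNoisyM (d : ℕ) (ε : ℝ) : Fin d → Matrix (Fin d) (Fin d) ℂ :=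
  fun x => ((Real.sqrt (((d : ℝ) - ((d : ℝ) - 1) * ε) / d)) : ℂ) • Matrix.single x x 1
    + ((Real.sqrt (ε / d)) : ℂ) • (1 - Matrix.single x x 1)


lemma vmv_mulVec {d : ℕ} (u w z : Fin d → ℂ) :
    (vecMulVec u w).mulVec z = (w ⬝ᵥ z) • u := by
  funext i
  simp only [vecMulVec, mulVec, dotProduct, of_apply, Pi.smul_apply, smul_eq_mul,
    Finset.sum_mul]
  exact Finset.sum_congr rfl fun k _ => by ring

lemma sum_ite_const {d : ℕ} (x : Fin d) (a b : ℂ) :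
    ∑ i : Fin d, (if i = x then a else b) = a + ((d:ℂ)-1) * b := by
  have h : ∀ i : Fin d, (if i = x then a else b) = b + (if i = x then a - b else 0) := by
    intro i; split_ifs <;> ring
  simp only [h, Finset.sum_add_distrib, Finset.sum_const, Finset.sum_ite_eq',
    Finset.mem_univ, if_true, Finset.card_univ, Fintype.card_fin, nsmul_eq_mul]
  ring

lemma diag_mulVec {d : ℕ} (c : Fin d → ℂ) (M : Matrix (Fin d) (Fin d) ℂ)
    (hM : ∀ k l, M k l = if k = l then c k else 0) (z : Fin d → ℂ) :
    M.mulVec z = fun k => c k * z k := by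
  funext k
  simp only [mulVec, dotProduct, hM, ite_mul, zero_mul]
  rw [Finset.sum_ite_eq]
  simp

/-- For the square-root decomposition of the noisy projective measurement at the unbiased
state `ψ`, with `A = d − (d−1)ε` one has `⟪ψ, K_{x,x} ψ⟫ = (1/d³)(√A + (d−1)√ε)²` and, for
`x ≠ j`, `⟪ψ, K_{x,j} ψ⟫ = (1/d³)(√A − √ε)²`. -/
theorem square_root_decomposition_unbiased_values
    {d : ℕ} (hd : 2 ≤ d) (ε : ℝ) (hε0 : 0 < ε) (hε1 : ε < 1) :
    let ψ : Fin d → ℂ := fun _ => ((Real.sqrt d : ℂ))⁻¹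
    let S : Fin d → Matrix (Fin d) (Fin d) ℂ := sqrtNoisyM d ε
    let oneNe : Fin d → Matrix (Fin d) (Fin d) ℂ := fun x => 1 - Matrix.single x x 1
    let Kdiag : Fin d → Matrix (Fin d) (Fin d) ℂ := fun x =>
      S x * vecMulVec ψ (star ψ) * S x
        + ((ε / d : ℝ) : ℂ) • (((((d : ℝ) - 1) / d : ℝ) : ℂ) • oneNe x
            - oneNe x * vecMulVec ψ (star ψ) * oneNe x)
    let v : Fin d → Fin d → (Fin d → ℂ) := fun x j =>
      (S x).mulVec (fun k => ψ j * (if k = x then 1 else 0) - ψ x * (if k = j then 1 else 0))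
    let A : ℝ := (d : ℝ) - ((d : ℝ) - 1) * ε
    (∀ x, (star ψ ⬝ᵥ (Kdiag x).mulVec ψ).re
        = (1 / (d : ℝ) ^ 3) * (Real.sqrt A + ((d : ℝ) - 1) * Real.sqrt ε) ^ 2) ∧
    (∀ x j, x ≠ j →
      (star ψ ⬝ᵥ (vecMulVec (v x j) (star (v x j))).mulVec ψ).re
        = (1 / (d : ℝ) ^ 3) * (Real.sqrt A - Real.sqrt ε) ^ 2) := by
  intro ψ S oneNe Kdiag v A
  set a : ℝ := Real.sqrt (A / d) with ha_def
  set b : ℝ := Real.sqrt (ε / d) with hb_def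
  set sd : ℝ := Real.sqrt d with hsd_def
  have hd0 : (0:ℝ) < d := by exact_mod_cast Nat.lt_of_lt_of_le Nat.zero_lt_two hd
  have hdC : ((d:ℂ)) ≠ 0 := by exact_mod_cast hd0.ne'
  have hsd0 : 0 < sd := Real.sqrt_pos.mpr hd0
  have hsdsd : sd * sd = d := Real.mul_self_sqrt hd0.le
  have hA0 : 0 ≤ A := by
    have h2 : (2:ℝ) ≤ d := by exact_mod_cast hd
    have : ((d:ℝ)-1) * ε ≤ ((d:ℝ)-1) * 1 := by
      apply mul_le_mul_of_nonneg_left hε1.le; linarith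
    simp only [A]; nlinarith
  have hψ : ∀ i : Fin d, ψ i = ((sd:ℝ):ℂ)⁻¹ := fun _ => rfl
  have hstarψ : star ψ = ψ := by
    funext i
    show star (((sd:ℝ):ℂ))⁻¹ = _
    rw [← Complex.ofReal_inv, Complex.star_def, Complex.conj_ofReal, Complex.ofReal_inv]
  have hinv2 : ((sd:ℝ):ℂ)⁻¹ * ((sd:ℝ):ℂ)⁻¹ = ((d:ℂ))⁻¹ := by
    rw [← mul_inv, ← Complex.ofReal_mul, hsdsd, Complex.ofReal_natCast]
  have hSapp : ∀ (x k l : Fin d),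
      S x k l = if k = l then (if k = x then ((a:ℝ):ℂ) else ((b:ℝ):ℂ)) else 0 := by
    intro x k l
    simp only [S, sqrtNoisyM, Matrix.add_apply, Matrix.smul_apply, Matrix.sub_apply,
      Matrix.one_apply, Matrix.single, Matrix.of_apply, smul_eq_mul, ha_def, hb_def]
    rcases eq_or_ne k l with rfl | hkl
    · rcases eq_or_ne k x with rfl | hkx
      · simp [A]
      · simp [Ne.symm hkx, hkx]
    · have h1 : ¬ (x = k ∧ x = l) := by rintro ⟨rfl, rfl⟩; exact hkl rfl
      simp [hkl, h1]
  have hSψ : ∀ x : Fin d,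
      (S x).mulVec ψ = fun k => (if k = x then ((a:ℝ):ℂ) else ((b:ℝ):ℂ)) * ((sd:ℝ):ℂ)⁻¹ := by
    intro x
    rw [diag_mulVec (fun k => if k = x then ((a:ℝ):ℂ) else ((b:ℝ):ℂ)) (S x) (hSapp x) ψ]
  have hc : ∀ x : Fin d,
      star ψ ⬝ᵥ (S x).mulVec ψ = (((a + ((d:ℝ)-1) * b) / d : ℝ) : ℂ) := by
    intro x
    rw [hstarψ, hSψ x]
    simp only [dotProduct, hψ]
    have h2 : ∀ i : Fin d,
        ((sd:ℝ):ℂ)⁻¹ * ((if i = x then ((a:ℝ):ℂ) else ((b:ℝ):ℂ)) * ((sd:ℝ):ℂ)⁻¹)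
        = (if i = x then ((a:ℝ):ℂ) else ((b:ℝ):ℂ)) * ((d:ℂ))⁻¹ := by
      intro i; rw [← hinv2]; ring
    simp only [h2, ← Finset.sum_mul, sum_ite_const]
    push_cast
    ring
  have honeapp : ∀ (x k l : Fin d),
      oneNe x k l = if k = l then (if k = x then (0:ℂ) else 1) else 0 := by
    intro x k l
    simp only [oneNe, Matrix.sub_apply, Matrix.one_apply, Matrix.single,
      Matrix.of_apply]
    rcases eq_or_ne k l with rfl | hkl
    · rcases eq_or_ne k x with rfl | hkx
      · simp
      · simp [Ne.symm hkx, hkx]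
    · have h1 : ¬ (x = k ∧ x = l) := by rintro ⟨rfl, rfl⟩; exact hkl rfl
      simp [hkl, h1]
  have honeψ : ∀ x : Fin d,
      (oneNe x).mulVec ψ = fun k => (if k = x then (0:ℂ) else 1) * ((sd:ℝ):ℂ)⁻¹ := by
    intro x
    rw [diag_mulVec (fun k => if k = x then (0:ℂ) else 1) (oneNe x) (honeapp x) ψ]
  have hw : ∀ x : Fin d,
      star ψ ⬝ᵥ (oneNe x).mulVec ψ = ((((d:ℝ)-1) / d : ℝ) : ℂ) := by
    intro x
    rw [hstarψ, honeψ x]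
    simp only [dotProduct, hψ]
    have h2 : ∀ i : Fin d,
        ((sd:ℝ):ℂ)⁻¹ * ((if i = x then (0:ℂ) else 1) * ((sd:ℝ):ℂ)⁻¹)
        = (if i = x then (0:ℂ) else 1) * ((d:ℂ))⁻¹ := by
      intro i; rw [← hinv2]; ring
    simp only [h2, ← Finset.sum_mul, sum_ite_const]
    push_cast
    ring
  have haA : a = Real.sqrt A / sd := by rw [ha_def, Real.sqrt_div hA0]
  have hbε : b = Real.sqrt ε / sd := by rw [hb_def, Real.sqrt_div hε0.le]
  constructor
  · intro x
    have hmain : star ψ ⬝ᵥ (Kdiag x).mulVec ψ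
        = (((a + ((d:ℝ)-1) * b) / d : ℝ) : ℂ) ^ 2
          + ((ε / d : ℝ) : ℂ) * (((((d:ℝ)-1) / d : ℝ) : ℂ) * ((((d:ℝ)-1) / d : ℝ) : ℂ)
            - ((((d:ℝ)-1) / d : ℝ) : ℂ) * ((((d:ℝ)-1) / d : ℝ) : ℂ)) := by
      have h1 : star ψ ⬝ᵥ (S x * vecMulVec ψ (star ψ) * S x) *ᵥ ψ
          = (((a + ((d:ℝ)-1) * b) / d : ℝ) : ℂ) * (((a + ((d:ℝ)-1) * b) / d : ℝ) : ℂ) := by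
        rw [← mulVec_mulVec, ← mulVec_mulVec, vmv_mulVec, mulVec_smul, dotProduct_smul,
          hc x, smul_eq_mul]
      have h2 : star ψ ⬝ᵥ (oneNe x * vecMulVec ψ (star ψ) * oneNe x) *ᵥ ψ
          = ((((d:ℝ)-1) / d : ℝ) : ℂ) * ((((d:ℝ)-1) / d : ℝ) : ℂ) := by
        rw [← mulVec_mulVec, ← mulVec_mulVec, vmv_mulVec, mulVec_smul, dotProduct_smul,
          hw x, smul_eq_mul]
      simp only [Kdiag, add_mulVec, dotProduct_add, smul_mulVec, dotProduct_smul,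
        sub_mulVec, dotProduct_sub, h1, h2, hw x, smul_eq_mul]
      ring
    rw [hmain]
    have hz : (((((d:ℝ)-1) / d : ℝ) : ℂ) * ((((d:ℝ)-1) / d : ℝ) : ℂ)
        - ((((d:ℝ)-1) / d : ℝ) : ℂ) * ((((d:ℝ)-1) / d : ℝ) : ℂ)) = 0 := by ring
    rw [hz, mul_zero, add_zero, ← Complex.ofReal_pow, Complex.ofReal_re]
    rw [haA, hbε]
    have hkey : (Real.sqrt A / sd + ((d:ℝ)-1) * (Real.sqrt ε / sd)) / d
        = (Real.sqrt A + ((d:ℝ)-1) * Real.sqrt ε) / (sd * d) := by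
      field_simp
    rw [hkey, div_pow, mul_pow, show sd ^ 2 = (d:ℝ) from by rw [sq, hsdsd],
      show (d:ℝ) * (d:ℝ)^2 = (d:ℝ)^3 from by ring, div_eq_mul_inv, one_div]
    exact mul_comm _ _
  · intro x j hxj
    have hvapp : v x j
        = fun k => ((if k = x then ((a:ℝ):ℂ) else 0) - (if k = j then ((b:ℝ):ℂ) else 0))
            * ((sd:ℝ):ℂ)⁻¹ := by
      have := diag_mulVec (fun k => if k = x then ((a:ℝ):ℂ) else ((b:ℝ):ℂ)) (S x) (hSapp x)
        (fun k => ψ j * (if k = x then 1 else 0) - ψ x * (if k = j then 1 else 0))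
      rw [show v x j = _ from this]
      funext k
      rcases eq_or_ne k x with rfl | hkx
      · simp [hψ, hxj, Ne.symm hxj]
        try ring
      · rcases eq_or_ne k j with rfl | hkj
        · simp [hψ, hkx, Ne.symm hxj]
          try ring
        · simp [hψ, hkx, hkj]
    have hstarv : star (v x j) = v x j := by
      rw [hvapp]
      funext k
      simp [Pi.star_apply, star_mul', star_sub, star_inv₀, apply_ite (star : ℂ → ℂ),
        Complex.star_def, Complex.conj_ofReal]
    have hsv : star ψ ⬝ᵥ v x j = (((a - b) / d : ℝ) : ℂ) := by
      rw [hstarψ, hvapp]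
      simp only [dotProduct, hψ]
      have h2 : ∀ i : Fin d,
          ((sd:ℝ):ℂ)⁻¹ * (((if i = x then ((a:ℝ):ℂ) else 0) - (if i = j then ((b:ℝ):ℂ) else 0))
            * ((sd:ℝ):ℂ)⁻¹)
          = ((if i = x then ((a:ℝ):ℂ) else 0) - (if i = j then ((b:ℝ):ℂ) else 0)) * ((d:ℂ))⁻¹ := by
        intro i; rw [← hinv2]; ring
      simp only [h2, ← Finset.sum_mul, Finset.sum_sub_distrib, Finset.sum_ite_eq',
        Finset.mem_univ, if_true]
      push_cast
      ring
    have hvψ : v x j ⬝ᵥ ψ = (((a - b) / d : ℝ) : ℂ) := by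
      rw [dotProduct_comm, ← hstarψ]
      exact hsv
    rw [vmv_mulVec, dotProduct_smul, smul_eq_mul, hstarv, hvψ, hsv, ← Complex.ofReal_mul,
      Complex.ofReal_re, haA, hbε]
    have hkey : (Real.sqrt A / sd - Real.sqrt ε / sd) / d
        = (Real.sqrt A - Real.sqrt ε) / (sd * d) := by
      field_simp
    rw [hkey, ← sq, div_pow, mul_pow, show sd ^ 2 = (d:ℝ) from by rw [sq, hsdsd],
      show (d:ℝ) * (d:ℝ)^2 = (d:ℝ)^3 from by ring, div_eq_mul_inv, one_div]
    exact mul_comm _ _
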